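/- The function d_0(T_a,T_b) = ‖m(T_a) − m(T_b)‖₂, where m(T) is the vector of root-to-MRCA edge counts for all tip pairs, is a metric on the set of topologies of rooted binary trees on k labeled tips (it is zero exactly when the trees have the same topology). -/

import Mathlib

/-- Rooted binary trees with tips labeled by `Fin k`; each internal node
stores the branch lengths of the edges to its two children. -/
inductive RTree (k : ℕ) : Type
  | leaf : Fin k → RTree k
  | node : ℝ → RTree k → ℝ → RTree k → RTree k

namespace RTree

variable {k : ℕ}

/-- The list of tip labels of a tree. -/
def tipList : RTree k → List (Fin k)
  | leaf i => [i]
  | node _ l _ r => l.tipList ++ r.tipList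

/-- The set of tip labels of a tree. -/
def tips (T : RTree k) : Finset (Fin k) := T.tipList.toFinset

/-- `T` is a phylogenetic tree on `k` labeled tips: each label occurs exactly once. -/
def IsPhylo (T : RTree k) : Prop := T.tipList.Nodup ∧ ∀ i : Fin k, i ∈ T.tipList

/-- All branch lengths are positive. -/
def PosLens : RTree k → Prop
  | leaf _ => True
  | node a l b r => 0 < a ∧ 0 < b ∧ PosLens l ∧ PosLens r

/-- All branch lengths are nonnegative. -/
def NonnegLens : RTree k → Prop
  | leaf _ => True
  | node a l b r => 0 ≤ a ∧ 0 ≤ b ∧ NonnegLens l ∧ NonnegLens r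

/-- All branch lengths are at most `ε`. -/
def LensLE (ε : ℝ) : RTree k → Prop
  | leaf _ => True
  | node a l b r => a ≤ ε ∧ b ≤ ε ∧ LensLE ε l ∧ LensLE ε r

/-- All branch lengths are equal to `1`. -/
def UnitLens : RTree k → Prop
  | leaf _ => True
  | node a l b r => a = 1 ∧ b = 1 ∧ UnitLens l ∧ UnitLens r

/-- `m T i j`: the number of edges on the path from the root to the
most recent common ancestor of tips `i` and `j`. -/
def m : RTree k → Fin k → Fin k → ℕ
  | leaf _, _, _ => 0
  | node _ l _ r, i, j =>
      if i ∈ l.tips ∧ j ∈ l.tips then m l i j + 1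
      else if i ∈ r.tips ∧ j ∈ r.tips then m r i j + 1
      else 0

/-- `Mlen T i j`: the sum of branch lengths on the path from the root to the
most recent common ancestor of tips `i` and `j`. -/
def Mlen : RTree k → Fin k → Fin k → ℝ
  | leaf _, _, _ => 0
  | node a l b r, i, j =>
      if i ∈ l.tips ∧ j ∈ l.tips then Mlen l i j + a
      else if i ∈ r.tips ∧ j ∈ r.tips then Mlen r i j + b
      else 0

/-- Whether the tree is a single leaf. -/
def isLeaf : RTree k → Bool
  | leaf _ => true
  | node _ _ _ _ => false

/-- `pend T i`: the length of the pendant edge leading to tip `i`. -/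
def pend : RTree k → Fin k → ℝ
  | leaf _, _ => 0
  | node a l b r, i =>
      if i ∈ l.tips then (if l.isLeaf then a else pend l i)
      else if i ∈ r.tips then (if r.isLeaf then b else pend r i)
      else 0

/-- The set of clades (tip sets of rooted subtrees) of a tree.  Two rooted
trees have the same topology iff they have the same set of clades, i.e. their
internal edges induce the same tip partitions. -/
def clades : RTree k → Set (Finset (Fin k))
  | leaf i => {{i}}
  | node a l b r => insert (node a l b r).tips (clades l ∪ clades r)

/-- Equality of rooted trees: same topology (ignoring the left/right order of
children) and equal corresponding branch lengths. -/
inductive TreeEq : RTree k → RTree k → Prop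
  | leaf (i : Fin k) : TreeEq (.leaf i) (.leaf i)
  | node {l l' r r' : RTree k} (a b : ℝ) :
      TreeEq l l' → TreeEq r r' → TreeEq (.node a l b r) (.node a l' b r')
  | swap {l l' r r' : RTree k} (a b : ℝ) :
      TreeEq l l' → TreeEq r r' → TreeEq (.node a l b r) (.node b r' a l')

/-- `S` is the rooted subtree of `T` hanging at a node at edge-depth `d`. -/
inductive SubtreeAt : RTree k → ℕ → RTree k → Prop
  | refl (T : RTree k) : SubtreeAt T 0 T
  | left {l S : RTree k} {d : ℕ} (a b : ℝ) (r : RTree k) :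
      SubtreeAt l d S → SubtreeAt (.node a l b r) (d + 1) S
  | right {r S : RTree k} {d : ℕ} (a b : ℝ) (l : RTree k) :
      SubtreeAt r d S → SubtreeAt (.node a l b r) (d + 1) S

/-- Relabel the tips of a tree by a permutation. -/
def relabel (σ : Equiv.Perm (Fin k)) : RTree k → RTree k
  | leaf i => leaf (σ i)
  | node a l b r => node a (relabel σ l) b (relabel σ r)

/-- The set of unordered pairs of distinct tips, represented by ordered pairs `(i, j)` with `i < j`. -/
def tipPairs (k : ℕ) : Finset (Fin k × Fin k) :=
  Finset.univ.filter (fun p => p.1 < p.2)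

/-- The `λ`-entry of the tree vector `v_λ(T)` at the pair `(i, j)`:
`(1 − λ) m_{i,j} + λ M_{i,j}`. -/
noncomputable def vPair (lam : ℝ) (T : RTree k) (i j : Fin k) : ℝ :=
  (1 - lam) * (T.m i j : ℝ) + lam * T.Mlen i j

/-- The `λ`-entry of the tree vector `v_λ(T)` at tip `i`: `(1 − λ) · 1 + λ p_i`. -/
noncomputable def vTip (lam : ℝ) (T : RTree k) (i : Fin k) : ℝ :=
  (1 - lam) * 1 + lam * T.pend i

/-- The metric `d_λ(T_a, T_b) = ‖v_λ(T_a) − v_λ(T_b)‖₂`. -/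
noncomputable def treeDist (lam : ℝ) (Ta Tb : RTree k) : ℝ :=
  Real.sqrt
    ((∑ p ∈ tipPairs k, (vPair lam Ta p.1 p.2 - vPair lam Tb p.1 p.2) ^ 2) +
      ∑ i : Fin k, (vTip lam Ta i - vTip lam Tb i) ^ 2)

/-- `‖m(T_a) − m(T_b)‖₂`, the Euclidean distance between the topology vectors
(the final `k` entries of `m` are all `1` and contribute nothing). -/
noncomputable def mDist (Ta Tb : RTree k) : ℝ :=
  Real.sqrt (∑ p ∈ tipPairs k, ((Ta.m p.1 p.2 : ℝ) - (Tb.m p.1 p.2 : ℝ)) ^ 2)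

/-- `‖M(T_a) − M(T_b)‖₂`, the Euclidean distance between the
branch-length vectors (root-to-MRCA path lengths and pendant lengths). -/
noncomputable def MDist (Ta Tb : RTree k) : ℝ :=
  Real.sqrt
    ((∑ p ∈ tipPairs k, (Ta.Mlen p.1 p.2 - Tb.Mlen p.1 p.2) ^ 2) +
      ∑ i : Fin k, (Ta.pend i - Tb.pend i) ^ 2)

/-- `D_λ(T_a,T_b) = (1−λ)‖m(T_a)−m(T_b)‖₂ + λ‖M(T_a)−M(T_b)‖₂`. -/
noncomputable def DDist (lam : ℝ) (Ta Tb : RTree k) : ℝ :=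
  (1 - lam) * mDist Ta Tb + lam * MDist Ta Tb


lemma mem_tips {T : RTree k} {i : Fin k} : i ∈ T.tips ↔ i ∈ T.tipList := List.mem_toFinset

lemma tips_node {a b : ℝ} {l r : RTree k} : (node a l b r).tips = l.tips ∪ r.tips := by
  simp [tips, tipList]

lemma tips_leaf {i : Fin k} : (leaf i : RTree k).tips = {i} := by
  simp [tips, tipList]

lemma tips_nonempty (T : RTree k) : T.tips.Nonempty := by
  induction T with
  | leaf i => exact ⟨i, by simp [tips_leaf]⟩
  | node a l b r ihl ihr => exact ⟨ihl.choose, by rw [tips_node]; exact Finset.mem_union_left _ ihl.choose_spec⟩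

lemma nodup_node {a b : ℝ} {l r : RTree k} (h : (node a l b r : RTree k).tipList.Nodup) :
    l.tipList.Nodup ∧ r.tipList.Nodup ∧ Disjoint l.tips r.tips := by
  rw [tipList, List.nodup_append] at h
  refine ⟨h.1, h.2.1, ?_⟩
  rw [Finset.disjoint_left]
  intro x hx hx'
  exact h.2.2 x (mem_tips.1 hx) x (mem_tips.1 hx') rfl

lemma m_symm (T : RTree k) (i j : Fin k) : m T i j = m T j i := by
  induction T with
  | leaf => rfl
  | node a l b r ihl ihr => simp only [m, ihl, ihr, and_comm]

lemma m_eq_zero : ∀ (T : RTree k) {i j : Fin k}, (i ∉ T.tips ∨ j ∉ T.tips) → m T i j = 0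
  | leaf _, _, _, _ => rfl
  | node a l b r, i, j, h => by
    rw [m, if_neg, if_neg]
    · rintro ⟨h1, h2⟩
      rcases h with h | h <;> rw [tips_node] at h
      · exact h (Finset.mem_union_right _ h1)
      · exact h (Finset.mem_union_right _ h2)
    · rintro ⟨h1, h2⟩
      rcases h with h | h <;> rw [tips_node] at h
      · exact h (Finset.mem_union_left _ h1)
      · exact h (Finset.mem_union_left _ h2)

lemma m_node_pos_iff {a b : ℝ} {l r : RTree k} {i j : Fin k} :
    0 < m (node a l b r) i j ↔ (i ∈ l.tips ∧ j ∈ l.tips) ∨ (i ∈ r.tips ∧ j ∈ r.tips) := by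
  rw [m]
  split_ifs with h1 h2 <;> simp [*]

lemma clade_subset_tips : ∀ {T : RTree k} {C}, C ∈ clades T → C ⊆ T.tips
  | leaf i, C, h => by
    simp only [clades, Set.mem_singleton_iff] at h
    simp [h, tips_leaf]
  | node a l b r, C, h => by
    simp only [clades, Set.mem_insert_iff, Set.mem_union] at h
    rcases h with h | h | h
    · exact h ▸ le_refl _
    · exact (clade_subset_tips h).trans (by rw [tips_node]; exact Finset.subset_union_left)
    · exact (clade_subset_tips h).trans (by rw [tips_node]; exact Finset.subset_union_right)

lemma clade_nonempty : ∀ {T : RTree k} {C}, C ∈ clades T → C.Nonempty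
  | leaf i, C, h => by
    simp only [clades, Set.mem_singleton_iff] at h
    exact h ▸ Finset.singleton_nonempty i
  | node a l b r, C, h => by
    simp only [clades, Set.mem_insert_iff, Set.mem_union] at h
    rcases h with h | h | h
    · exact h ▸ tips_nonempty _
    · exact clade_nonempty h
    · exact clade_nonempty h

lemma tips_mem_clades (T : RTree k) : T.tips ∈ clades T := by
  cases T with
  | leaf i => simp [clades, tips_leaf]
  | node a l b r => simp [clades]

lemma clades_swap {a b : ℝ} {l r : RTree k} :
    clades (node a l b r : RTree k) = clades (node b r a l) := by
  simp [clades, tips_node, Finset.union_comm, Set.union_comm]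

lemma exists_two_tips {a b : ℝ} {l r : RTree k}
    (h : (node a l b r : RTree k).tipList.Nodup) :
    ∃ x y, x ∈ (node a l b r).tips ∧ y ∈ (node a l b r).tips ∧ x ≠ y := by
  obtain ⟨_, _, hd⟩ := nodup_node h
  obtain ⟨x, hx⟩ := tips_nonempty l
  obtain ⟨y, hy⟩ := tips_nonempty r
  exact ⟨x, y, by rw [tips_node]; exact Finset.mem_union_left _ hx,
    by rw [tips_node]; exact Finset.mem_union_right _ hy,
    fun hxy => Finset.disjoint_left.1 hd hx (hxy ▸ hy)⟩


/-- A two-block partition of a finite set is determined by its "same block"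
relation (up to swapping the blocks). -/
lemma partition_match {L R L' R' : Finset (Fin k)}
    (hLne : L.Nonempty)
    (hd : Disjoint L R) (hd' : Disjoint L' R')
    (hu : L ∪ R = L' ∪ R')
    (hss : ∀ i j : Fin k, ((i ∈ L ∧ j ∈ L) ∨ (i ∈ R ∧ j ∈ R)) ↔
      ((i ∈ L' ∧ j ∈ L') ∨ (i ∈ R' ∧ j ∈ R'))) :
    (L = L' ∧ R = R') ∨ (L = R' ∧ R = L') := by
  obtain ⟨i0, hi0⟩ := hLne
  have hi0u : i0 ∈ L' ∪ R' := hu ▸ Finset.mem_union_left R hi0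
  have key : ∀ (A B : Finset (Fin k)), Disjoint A B → i0 ∈ A → L ∪ R = A ∪ B →
      (∀ j, ((i0 ∈ L ∧ j ∈ L) ∨ (i0 ∈ R ∧ j ∈ R)) ↔ ((i0 ∈ A ∧ j ∈ A) ∨ (i0 ∈ B ∧ j ∈ B))) →
      A = L ∧ B = R := by
    intro A B hdAB hi0A hABu hss'
    have hAL : A = L := by
      ext j
      constructor
      · intro hj
        rcases (hss' j).2 (Or.inl ⟨hi0A, hj⟩) with ⟨_, h⟩ | ⟨h, _⟩
        · exact h
        · exact absurd h (Finset.disjoint_left.1 hd hi0)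
      · intro hj
        rcases (hss' j).1 (Or.inl ⟨hi0, hj⟩) with ⟨_, h⟩ | ⟨h, _⟩
        · exact h
        · exact absurd h (Finset.disjoint_left.1 hdAB hi0A)
    refine ⟨hAL, ?_⟩
    ext x
    constructor
    · intro hx
      have hxu : x ∈ L ∪ R := hABu.symm ▸ Finset.mem_union_right A hx
      rcases Finset.mem_union.1 hxu with h | h
      · exact absurd hx (Finset.disjoint_left.1 hdAB (hAL.symm ▸ h))
      · exact h
    · intro hx
      have hxu : x ∈ A ∪ B := hABu ▸ Finset.mem_union_right L hx
      rcases Finset.mem_union.1 hxu with h | h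
      · exact absurd hx (Finset.disjoint_left.1 hd (hAL ▸ h))
      · exact h
  rcases Finset.mem_union.1 hi0u with h | h
  · rcases key L' R' hd' h hu (fun j => hss i0 j) with ⟨h1, h2⟩
    exact Or.inl ⟨h1.symm, h2.symm⟩
  · rcases key R' L' hd'.symm h (hu.trans (Finset.union_comm _ _)) (fun j => (hss i0 j).trans or_comm) with ⟨h1, h2⟩
    exact Or.inr ⟨h1.symm, h2.symm⟩


lemma clades_eq_of_m_eq : ∀ (Ta Tb : RTree k),
    Ta.tipList.Nodup → Tb.tipList.Nodup → Ta.tips = Tb.tips →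
    (∀ i j : Fin k, i ≠ j → m Ta i j = m Tb i j) →
    clades Ta = clades Tb
  | leaf i, leaf j, _, _, htips, _ => by
    rw [tips_leaf, tips_leaf] at htips
    rw [Finset.singleton_inj.1 htips]
  | leaf i, node a' l' b' r', _, hnb, htips, _ => by
    obtain ⟨x, y, hx, hy, hxy⟩ := exists_two_tips hnb
    rw [← htips, tips_leaf, Finset.mem_singleton] at hx hy
    exact absurd (hx.trans hy.symm) hxy
  | node a l b r, leaf j, hna, _, htips, _ => by
    obtain ⟨x, y, hx, hy, hxy⟩ := exists_two_tips hna
    rw [htips, tips_leaf, Finset.mem_singleton] at hx hy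
    exact absurd (hx.trans hy.symm) hxy
  | node a l b r, node a' l' b' r', hna, hnb, htips, hm => by
    obtain ⟨hnl, hnr, hd⟩ := nodup_node hna
    obtain ⟨hnl', hnr', hd'⟩ := nodup_node hnb
    have hu : l.tips ∪ r.tips = l'.tips ∪ r'.tips := by
      rw [← tips_node, ← tips_node]; exact htips
    have hss : ∀ i j : Fin k,
        ((i ∈ l.tips ∧ j ∈ l.tips) ∨ (i ∈ r.tips ∧ j ∈ r.tips)) ↔
        ((i ∈ l'.tips ∧ j ∈ l'.tips) ∨ (i ∈ r'.tips ∧ j ∈ r'.tips)) := by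
      intro i j
      by_cases hij : i = j
      · subst hij
        have : i ∈ l.tips ∪ r.tips ↔ i ∈ l'.tips ∪ r'.tips := by rw [hu]
        simpa [and_self, ← Finset.mem_union] using this
      · rw [← m_node_pos_iff (a := a) (b := b), ← m_node_pos_iff (a := a') (b := b'),
          hm i j hij]
    rcases partition_match (tips_nonempty l) hd hd' hu hss with ⟨h1, h2⟩ | ⟨h1, h2⟩
    · -- l matches l', r matches r'
      have hml : ∀ i j : Fin k, i ≠ j → m l i j = m l' i j := by
        intro i j hij
        by_cases hmem : i ∈ l.tips ∧ j ∈ l.tips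
        · have e1 : m (node a l b r) i j = m l i j + 1 := by rw [m, if_pos hmem]
          have e2 : m (node a' l' b' r') i j = m l' i j + 1 := by
            rw [m, if_pos (h1 ▸ hmem)]
          have h3 := hm i j hij; rw [e1, e2] at h3; omega
        · rw [m_eq_zero l (not_and_or.1 hmem), m_eq_zero l' (h1 ▸ not_and_or.1 hmem)]
      have hmr : ∀ i j : Fin k, i ≠ j → m r i j = m r' i j := by
        intro i j hij
        by_cases hmem : i ∈ r.tips ∧ j ∈ r.tips
        · have hnl1 : ¬(i ∈ l.tips ∧ j ∈ l.tips) :=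
            fun h => Finset.disjoint_left.1 hd h.1 hmem.1
          have hnl2 : ¬(i ∈ l'.tips ∧ j ∈ l'.tips) :=
            fun h => Finset.disjoint_left.1 hd' h.1 (h2 ▸ hmem.1)
          have e1 : m (node a l b r) i j = m r i j + 1 := by
            rw [m, if_neg hnl1, if_pos hmem]
          have e2 : m (node a' l' b' r') i j = m r' i j + 1 := by
            rw [m, if_neg hnl2, if_pos (h2 ▸ hmem)]
          have h3 := hm i j hij; rw [e1, e2] at h3; omega
        · rw [m_eq_zero r (not_and_or.1 hmem), m_eq_zero r' (h2 ▸ not_and_or.1 hmem)]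
      have cl : clades l = clades l' := clades_eq_of_m_eq l l' hnl hnl' h1 hml
      have cr : clades r = clades r' := clades_eq_of_m_eq r r' hnr hnr' h2 hmr
      simp only [clades, cl, cr, htips]
    · -- l matches r', r matches l'
      have hml : ∀ i j : Fin k, i ≠ j → m l i j = m r' i j := by
        intro i j hij
        by_cases hmem : i ∈ l.tips ∧ j ∈ l.tips
        · have hnl2 : ¬(i ∈ l'.tips ∧ j ∈ l'.tips) :=
            fun h => Finset.disjoint_left.1 hd' h.1 (h1 ▸ hmem.1)
          have e1 : m (node a l b r) i j = m l i j + 1 := by rw [m, if_pos hmem]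
          have e2 : m (node a' l' b' r') i j = m r' i j + 1 := by
            rw [m, if_neg hnl2, if_pos (h1 ▸ hmem)]
          have h3 := hm i j hij; rw [e1, e2] at h3; omega
        · rw [m_eq_zero l (not_and_or.1 hmem), m_eq_zero r' (h1 ▸ not_and_or.1 hmem)]
      have hmr : ∀ i j : Fin k, i ≠ j → m r i j = m l' i j := by
        intro i j hij
        by_cases hmem : i ∈ r.tips ∧ j ∈ r.tips
        · have hnl1 : ¬(i ∈ l.tips ∧ j ∈ l.tips) :=
            fun h => Finset.disjoint_left.1 hd h.1 hmem.1
          have e1 : m (node a l b r) i j = m r i j + 1 := by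
            rw [m, if_neg hnl1, if_pos hmem]
          have e2 : m (node a' l' b' r') i j = m l' i j + 1 := by
            rw [m, if_pos (h2 ▸ hmem)]
          have h3 := hm i j hij; rw [e1, e2] at h3; omega
        · rw [m_eq_zero r (not_and_or.1 hmem), m_eq_zero l' (h2 ▸ not_and_or.1 hmem)]
      have cl : clades l = clades r' := clades_eq_of_m_eq l r' hnl hnr' h1 hml
      have cr : clades r = clades l' := clades_eq_of_m_eq r l' hnr hnl' h2 hmr
      simp only [clades, cl, cr, htips]
      rw [Set.union_comm]


lemma clades_node_left {a b : ℝ} {l r : RTree k} (hd : Disjoint l.tips r.tips) :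
    clades l = {C | C ∈ clades (node a l b r) ∧ C ⊆ l.tips} := by
  ext C
  constructor
  · intro h
    refine ⟨?_, clade_subset_tips h⟩
    simp only [clades, Set.mem_insert_iff, Set.mem_union]
    exact Or.inr (Or.inl h)
  · rintro ⟨h, hsub⟩
    simp only [clades, Set.mem_insert_iff, Set.mem_union] at h
    rcases h with h | h | h
    · exfalso
      obtain ⟨y, hy⟩ := tips_nonempty r
      have : y ∈ l.tips := hsub (h ▸ (tips_node ▸ Finset.mem_union_right l.tips hy))
      exact Finset.disjoint_left.1 hd this hy
    · exact h
    · exfalso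
      obtain ⟨y, hy⟩ := clade_nonempty h
      exact Finset.disjoint_left.1 hd (hsub hy) (clade_subset_tips h hy)

lemma clades_node_right {a b : ℝ} {l r : RTree k} (hd : Disjoint l.tips r.tips) :
    clades r = {C | C ∈ clades (node a l b r) ∧ C ⊆ r.tips} :=
  (clades_node_left (a := b) (b := a) hd.symm).trans (by rw [← clades_swap])

lemma sameside_iff_clade {a b : ℝ} {l r : RTree k} (hd : Disjoint l.tips r.tips)
    (i j : Fin k) :
    ((i ∈ l.tips ∧ j ∈ l.tips) ∨ (i ∈ r.tips ∧ j ∈ r.tips)) ↔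
      ∃ C ∈ clades (node a l b r), C ≠ (node a l b r).tips ∧ i ∈ C ∧ j ∈ C := by
  constructor
  · rintro (⟨h1, h2⟩ | ⟨h1, h2⟩)
    · refine ⟨l.tips, ?_, ?_, h1, h2⟩
      · simp only [clades, Set.mem_insert_iff, Set.mem_union]
        exact Or.inr (Or.inl (tips_mem_clades l))
      · intro hEq
        obtain ⟨y, hy⟩ := tips_nonempty r
        have : y ∈ l.tips := hEq ▸ (tips_node ▸ Finset.mem_union_right l.tips hy)
        exact Finset.disjoint_left.1 hd this hy
    · refine ⟨r.tips, ?_, ?_, h1, h2⟩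
      · simp only [clades, Set.mem_insert_iff, Set.mem_union]
        exact Or.inr (Or.inr (tips_mem_clades r))
      · intro hEq
        obtain ⟨y, hy⟩ := tips_nonempty l
        have : y ∈ r.tips := hEq ▸ (tips_node ▸ Finset.mem_union_left r.tips hy)
        exact Finset.disjoint_left.1 hd hy this
  · rintro ⟨C, hC, hne, hi, hj⟩
    simp only [clades, Set.mem_insert_iff, Set.mem_union] at hC
    rcases hC with h | h | h
    · exact absurd h hne
    · exact Or.inl ⟨clade_subset_tips h hi, clade_subset_tips h hj⟩
    · exact Or.inr ⟨clade_subset_tips h hi, clade_subset_tips h hj⟩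

lemma m_eq_of_clades_eq : ∀ (Ta Tb : RTree k),
    Ta.tipList.Nodup → Tb.tipList.Nodup → Ta.tips = Tb.tips →
    clades Ta = clades Tb → ∀ i j : Fin k, m Ta i j = m Tb i j
  | leaf _, leaf _, _, _, _, _, _, _ => rfl
  | leaf i0, node a' l' b' r', _, hnb, htips, hcl, i, j => by
    exfalso
    have h := tips_mem_clades (node a' l' b' r')
    rw [← hcl] at h
    simp only [clades, Set.mem_singleton_iff] at h
    obtain ⟨x, y, hx, hy, hxy⟩ := exists_two_tips hnb
    rw [h, Finset.mem_singleton] at hx hy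
    exact hxy (hx.trans hy.symm)
  | node a l b r, leaf j0, hna, _, htips, hcl, i, j => by
    exfalso
    have h := tips_mem_clades (node a l b r)
    rw [hcl] at h
    simp only [clades, Set.mem_singleton_iff] at h
    obtain ⟨x, y, hx, hy, hxy⟩ := exists_two_tips hna
    rw [h, Finset.mem_singleton] at hx hy
    exact hxy (hx.trans hy.symm)
  | node a l b r, node a' l' b' r', hna, hnb, htips, hcl, i, j => by
    obtain ⟨hnl, hnr, hd⟩ := nodup_node hna
    obtain ⟨hnl', hnr', hd'⟩ := nodup_node hnb
    have hu : l.tips ∪ r.tips = l'.tips ∪ r'.tips := by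
      rw [← tips_node, ← tips_node]; exact htips
    have hss : ∀ i j : Fin k,
        ((i ∈ l.tips ∧ j ∈ l.tips) ∨ (i ∈ r.tips ∧ j ∈ r.tips)) ↔
        ((i ∈ l'.tips ∧ j ∈ l'.tips) ∨ (i ∈ r'.tips ∧ j ∈ r'.tips)) := by
      intro i j
      rw [sameside_iff_clade (a := a) (b := b) hd i j,
        sameside_iff_clade (a := a') (b := b') hd' i j, hcl, htips]
    rcases partition_match (tips_nonempty l) hd hd' hu hss with ⟨h1, h2⟩ | ⟨h1, h2⟩
    · have cll : clades l = clades l' := by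
        rw [clades_node_left (a := a) (b := b) hd,
          clades_node_left (a := a') (b := b') hd', hcl, h1]
      have clr : clades r = clades r' := by
        rw [clades_node_right (a := a) (b := b) hd,
          clades_node_right (a := a') (b := b') hd', hcl, h2]
      have ml := m_eq_of_clades_eq l l' hnl hnl' h1 cll
      have mr := m_eq_of_clades_eq r r' hnr hnr' h2 clr
      simp only [m]
      by_cases c1 : i ∈ l.tips ∧ j ∈ l.tips
      · rw [if_pos c1, if_pos (h1 ▸ c1), ml]
      · rw [if_neg c1, if_neg (fun h => c1 (h1.symm ▸ h))]
        by_cases c2 : i ∈ r.tips ∧ j ∈ r.tips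
        · rw [if_pos c2, if_pos (h2 ▸ c2), mr]
        · rw [if_neg c2, if_neg (fun h => c2 (h2.symm ▸ h))]
    · have cll : clades l = clades r' := by
        rw [clades_node_left (a := a) (b := b) hd,
          clades_node_right (a := a') (b := b') hd', hcl, h1]
      have clr : clades r = clades l' := by
        rw [clades_node_right (a := a) (b := b) hd,
          clades_node_left (a := a') (b := b') hd', hcl, h2]
      have ml := m_eq_of_clades_eq l r' hnl hnr' h1 cll
      have mr := m_eq_of_clades_eq r l' hnr hnl' h2 clr
      simp only [m]
      by_cases c1 : i ∈ l.tips ∧ j ∈ l.tips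
      · have hc1' : ¬(i ∈ l'.tips ∧ j ∈ l'.tips) :=
          fun h => Finset.disjoint_left.1 hd' h.1 (h1 ▸ c1.1)
        rw [if_pos c1, if_neg hc1', if_pos (h1 ▸ c1), ml]
      · by_cases c2 : i ∈ r.tips ∧ j ∈ r.tips
        · rw [if_neg c1, if_pos c2, if_pos (h2 ▸ c2), mr]
        · rw [if_neg c1, if_neg c2, if_neg (fun h => c2 (h2.symm ▸ h)),
            if_neg (fun h => c1 (h1.symm ▸ h))]


lemma tips_univ {T : RTree k} (h : T.IsPhylo) : T.tips = Finset.univ :=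
  Finset.eq_univ_iff_forall.2 fun i => mem_tips.2 (h.2 i)

noncomputable def mVec (T : RTree k) : EuclideanSpace ℝ (tipPairs k) :=
  WithLp.toLp 2 (fun p => (m T p.1.1 p.1.2 : ℝ))

lemma mDist_eq_norm (Ta Tb : RTree k) : mDist Ta Tb = ‖mVec Ta - mVec Tb‖ := by
  rw [mDist, EuclideanSpace.norm_eq]
  congr 1
  rw [← Finset.sum_coe_sort (tipPairs k)
    (fun p => ((m Ta p.1 p.2 : ℝ) - (m Tb p.1 p.2 : ℝ)) ^ 2)]
  apply Finset.sum_congr rfl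
  intro p _
  rw [Real.norm_eq_abs, sq_abs]
  rfl

lemma mDist_eq_zero_iff (Ta Tb : RTree k) :
    mDist Ta Tb = 0 ↔ ∀ p ∈ tipPairs k, m Ta p.1 p.2 = m Tb p.1 p.2 := by
  rw [mDist_eq_norm, norm_eq_zero, sub_eq_zero, WithLp.ext_iff, funext_iff]
  constructor
  · intro h p hp
    have := h ⟨p, hp⟩
    simpa [mVec] using this
  · intro h p
    have := h p.1 p.2
    simp only [mVec]
    exact_mod_cast this

lemma mem_tipPairs {p : Fin k × Fin k} : p ∈ tipPairs k ↔ p.1 < p.2 := by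
  simp [tipPairs]

end RTree
open RTree in
/-- `d₀(T_a,T_b) = ‖m(T_a) − m(T_b)‖₂` is a metric on the set of
topologies of rooted binary trees on `k` labeled tips: it vanishes exactly when
the trees have the same topology (same set of clades / tip partitions). -/
theorem mDist_is_metric_on_topologies {k : ℕ} :
    (∀ Ta Tb : RTree k, Ta.IsPhylo → Tb.IsPhylo → 0 ≤ mDist Ta Tb) ∧
    (∀ Ta Tb : RTree k, Ta.IsPhylo → Tb.IsPhylo →
      (mDist Ta Tb = 0 ↔ Ta.clades = Tb.clades)) ∧
    (∀ Ta Tb : RTree k, Ta.IsPhylo → Tb.IsPhylo → mDist Ta Tb = mDist Tb Ta) ∧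
    (∀ Ta Tb Tc : RTree k, Ta.IsPhylo → Tb.IsPhylo → Tc.IsPhylo →
      mDist Ta Tb ≤ mDist Ta Tc + mDist Tc Tb) := by
  refine ⟨fun Ta Tb _ _ => Real.sqrt_nonneg _, fun Ta Tb ha hb => ?_,
    fun Ta Tb _ _ => by rw [mDist_eq_norm, mDist_eq_norm, norm_sub_rev],
    fun Ta Tb Tc _ _ _ => by
      rw [mDist_eq_norm, mDist_eq_norm, mDist_eq_norm, ← dist_eq_norm,
        ← dist_eq_norm, ← dist_eq_norm]
      exact dist_triangle _ _ _⟩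
  rw [mDist_eq_zero_iff]
  constructor
  · intro h
    refine clades_eq_of_m_eq Ta Tb ha.1 hb.1 (by rw [tips_univ ha, tips_univ hb]) ?_
    intro i j hij
    rcases lt_or_gt_of_ne hij with h' | h'
    · exact h (i, j) (mem_tipPairs.2 h')
    · rw [m_symm Ta, m_symm Tb]
      exact h (j, i) (mem_tipPairs.2 h')
  · intro hcl p _
    exact m_eq_of_clades_eq Ta Tb ha.1 hb.1
      (by rw [tips_univ ha, tips_univ hb]) hcl p.1 p.2
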